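/- arXiv:quant-ph/0101144 — 2 statements merged into one kernel-verified Lean document; each statement's English description precedes it below -/
import Mathlib

section
/- Let O be a Hermitian operator on a finite-dimensional Hilbert space H, let E be another finite-dimensional Hilbert space with a fixed unit vector u, and let U : H ⊗ span{u} → H ⊗ E be an isometry such that Tr_E[U (O ⊗ |u⟩⟨u|) U†] = O. If P₊ denotes the spectral projection of O onto its positive eigenvalues, then [P₊ ⊗ 1_E, U] (P₊ ⊗ |u⟩⟨u|) = 0, i.e., ((1−P₊) ⊗ 1_E) U (P₊ ⊗ |u⟩⟨u|) = 0. -/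
open Matrix BigOperators Kronecker
open scoped ComplexOrder
open scoped MatrixOrder

noncomputable section

/-- Partial trace over the ancilla factor `e`. -/
def ptrE {n e : Type*} [Fintype n] [Fintype e]
    (M : Matrix (n × e) (n × e) ℂ) : Matrix n n ℂ :=
  Matrix.of fun i j => ∑ k, M (i, k) (j, k)

section Aux

set_option linter.unusedSectionVars false

variable {n e : Type*} [Fintype n] [DecidableEq n] [Fintype e] [DecidableEq e]

lemma trace_kron_one_mul (A : Matrix n n ℂ) (N : Matrix (n × e) (n × e) ℂ) :
    ((A ⊗ₖ (1 : Matrix e e ℂ)) * N).trace = (A * ptrE N).trace := by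
  simp only [Matrix.trace, Matrix.diag, Matrix.mul_apply, ptrE, Matrix.of_apply,
    kroneckerMap_apply, Matrix.one_apply, Fintype.sum_prod_type, Finset.mul_sum,
    mul_ite, mul_one, mul_zero, ite_mul, zero_mul]
  refine Finset.sum_congr rfl fun i _ => ?_
  rw [Finset.sum_comm]
  refine Finset.sum_congr rfl fun j _ => ?_
  rw [Finset.sum_comm]
  refine Finset.sum_congr rfl fun k _ => ?_
  simp

lemma kron_one_conjTranspose (A : Matrix n n ℂ) :
    (A ⊗ₖ (1 : Matrix e e ℂ))ᴴ = Aᴴ ⊗ₖ (1 : Matrix e e ℂ) := by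
  ext ⟨i, k⟩ ⟨j, l⟩
  simp [Matrix.conjTranspose_apply, Matrix.one_apply, apply_ite (star : ℂ → ℂ), eq_comm]

lemma psd_trace_nonneg {M : Matrix n n ℂ} (hM : M.PosSemidef) : 0 ≤ M.trace := by
  refine Finset.sum_nonneg fun i _ => ?_
  have := hM.dotProduct_mulVec_nonneg (Pi.single i 1)
  simpa [dotProduct, Matrix.mulVec, Pi.single_apply] using this

lemma psd_trace_eq_zero {M : Matrix n n ℂ} (hM : M.PosSemidef) (h : M.trace = 0) :
    M = 0 := by
  have hS := (CFC.sqrt_nonneg M).posSemidef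
  have hsq : CFC.sqrt M * CFC.sqrt M = M := CFC.sqrt_mul_sqrt_self M hM.nonneg
  have hherm : (CFC.sqrt M)ᴴ = CFC.sqrt M := hS.1
  have h0 : (CFC.sqrt M)ᴴ * CFC.sqrt M = M := by rw [hherm, hsq]
  have htr : ∑ j, ((CFC.sqrt M)ᴴ * CFC.sqrt M) j j = 0 := by
    have : ((CFC.sqrt M)ᴴ * CFC.sqrt M).trace = 0 := by rw [h0, h]
    simpa [Matrix.trace, Matrix.diag] using this
  have hnn : ∀ j ∈ Finset.univ, (0:ℂ) ≤ ((CFC.sqrt M)ᴴ * CFC.sqrt M) j j := fun j _ => by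
    simp only [Matrix.mul_apply, Matrix.conjTranspose_apply]
    exact Finset.sum_nonneg fun i _ => star_mul_self_nonneg _
  have hdiag := (Finset.sum_eq_zero_iff_of_nonneg hnn).mp htr
  have hz : CFC.sqrt M = 0 := by
    ext i j
    have := hdiag j (Finset.mem_univ j)
    simp only [Matrix.mul_apply, Matrix.conjTranspose_apply] at this
    have hz := (Fintype.sum_eq_zero_iff_of_nonneg
      fun i => star_mul_self_nonneg (CFC.sqrt M i j)).mp this
    have := congrFun hz i
    simpa [mul_eq_zero] using this
  rw [← hsq, hz, Matrix.mul_zero]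

lemma surj_PO (O P : Matrix n n ℂ) (hPherm : P.IsHermitian) (hPproj : P * P = P)
    (hstrict : ∀ x : n → ℂ, P.mulVec x = x → x ≠ 0 → 0 < (star x ⬝ᵥ O.mulVec x).re)
    (y : n → ℂ) : ∃ z, (P * O) *ᵥ z = P *ᵥ y := by
  set W := LinearMap.range (Matrix.mulVecLin P) with hW
  have hfix : ∀ x ∈ W, P *ᵥ x = x := by
    rintro x ⟨v, rfl⟩
    simp [Matrix.mulVecLin_apply, Matrix.mulVec_mulVec, ← Matrix.mul_assoc, hPproj]
  have hmaps : ∀ x ∈ W, Matrix.mulVecLin (P * O) x ∈ W := by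
    intro x _
    exact ⟨O *ᵥ x, by simp [Matrix.mulVecLin_apply, Matrix.mulVec_mulVec]⟩
  set f := (Matrix.mulVecLin (P * O)).restrict hmaps with hf
  have hker : ∀ w : W, f w = 0 → w = 0 := by
    intro w hw
    have hval : (P * O) *ᵥ (w : n → ℂ) = 0 := congrArg Subtype.val hw
    by_contra hne
    have hx0 : (w : n → ℂ) ≠ 0 := fun h => hne (Subtype.ext h)
    have hPx : P *ᵥ (w : n → ℂ) = (w : n → ℂ) := hfix _ w.2
    have hdp : star (w : n → ℂ) ⬝ᵥ O *ᵥ (w : n → ℂ) = 0 := by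
      have h1 : star (w : n → ℂ) ⬝ᵥ (P * O) *ᵥ (w : n → ℂ) = 0 := by rw [hval]; simp
      have h2 : star (w : n → ℂ) ᵥ* P = star (w : n → ℂ) := by
        have := Matrix.star_mulVec (M := Pᴴ) (v := (w : n → ℂ))
        rw [Matrix.conjTranspose_conjTranspose, hPherm.eq, hPx] at this
        exact this.symm
      rw [← Matrix.mulVec_mulVec, Matrix.dotProduct_mulVec, h2] at h1
      exact h1
    have := hstrict _ hPx hx0
    rw [hdp] at this
    simp at this
  have hinj : Function.Injective f := LinearMap.ker_eq_bot.mp (LinearMap.ker_eq_bot'.mpr hker)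
  have hsurj : Function.Surjective f := LinearMap.injective_iff_surjective.mp hinj
  obtain ⟨w, hw⟩ := hsurj ⟨P *ᵥ y, ⟨y, rfl⟩⟩
  exact ⟨w, congrArg Subtype.val hw⟩

end Aux

/-- Lemma 1: if the isometry `V = U(· ⊗ |u⟩)` induces a channel
`X ↦ Tr_E[V X Vᴴ]` preserving the Hermitian operator `O`, and `P` is the spectral
projection of `O` onto its strictly positive eigenvalues, then
`((1-P) ⊗ 1_E) U (P ⊗ |u⟩⟨u|) = 0`, i.e. `((1-P) ⊗ₖ 1) V P = 0`. -/
theorem stmt1 {n e : Type*} [Fintype n] [DecidableEq n] [Fintype e] [DecidableEq e]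
    (O P : Matrix n n ℂ) (hO : O.IsHermitian)
    (hPherm : P.IsHermitian) (hPproj : P * P = P)
    (hcomm : P * O = O * P)
    (hpos : (P * O).PosSemidef)
    (hneg : ((P - 1) * O).PosSemidef)
    (hstrict : ∀ x : n → ℂ, P.mulVec x = x → x ≠ 0 →
      0 < (star x ⬝ᵥ O.mulVec x).re)
    (V : Matrix (n × e) n ℂ) (hiso : Vᴴ * V = 1)
    (hpre : ptrE (V * O * Vᴴ) = O) :
    ((1 - P) ⊗ₖ (1 : Matrix e e ℂ)) * V * P = 0 := by
  set Q : Matrix n n ℂ := 1 - P with hQdef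
  have hQherm : Qᴴ = Q := by
    rw [hQdef, Matrix.conjTranspose_sub, Matrix.conjTranspose_one, hPherm.eq]
  have hQQ : Q * Q = Q := by
    rw [hQdef]
    simp only [Matrix.mul_sub, Matrix.sub_mul, Matrix.one_mul, Matrix.mul_one, hPproj]
    abel
  have hPQ : P + Q = 1 := by rw [hQdef]; abel
  have hnegQO : (-(Q * O)).PosSemidef := by
    have : -(Q * O) = (P - 1) * O := by
      rw [hQdef, ← Matrix.neg_mul, neg_sub]
    rw [this]; exact hneg
  set Pk : Matrix (n × e) (n × e) ℂ := P ⊗ₖ (1 : Matrix e e ℂ) with hPkdef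
  set Qk : Matrix (n × e) (n × e) ℂ := Q ⊗ₖ (1 : Matrix e e ℂ) with hQkdef
  have hQkH : Qkᴴ = Qk := by rw [hQkdef, kron_one_conjTranspose, hQherm]
  have hQkQk : Qk * Qk = Qk := by
    rw [hQkdef, ← Matrix.mul_kronecker_mul, hQQ, Matrix.one_mul]
  have hPkPk : Pk * Pk = Pk := by
    rw [hPkdef, ← Matrix.mul_kronecker_mul, hPproj, Matrix.one_mul]
  have hPkQk : Pk + Qk = 1 := by
    rw [hPkdef, hQkdef, ← Matrix.add_kronecker, hPQ, Matrix.one_kronecker_one]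
  -- the three key matrices
  set M1 : Matrix (n × e) (n × e) ℂ := Qk * V * (P * O) * Vᴴ * Qk with hM1def
  set M2 : Matrix (n × e) (n × e) ℂ := Qk * V * (Q * O) * Vᴴ * Qk with hM2def
  set M3 : Matrix (n × e) (n × e) ℂ := Pk * V * (Q * O) * Vᴴ * Pk with hM3def
  have hM1psd : M1.PosSemidef := by
    have := hpos.mul_mul_conjTranspose_same (Qk * V)
    rw [Matrix.conjTranspose_mul, hQkH] at this
    simpa [hM1def, Matrix.mul_assoc] using this
  have hM2psd : (-M2).PosSemidef := by
    have := hnegQO.mul_mul_conjTranspose_same (Qk * V)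
    rw [Matrix.conjTranspose_mul, hQkH] at this
    simpa [hM2def, Matrix.mul_assoc, Matrix.mul_neg, Matrix.neg_mul] using this
  have hM3psd : (-M3).PosSemidef := by
    have := hnegQO.mul_mul_conjTranspose_same (Pk * V)
    have hPkH : Pkᴴ = Pk := by rw [hPkdef, kron_one_conjTranspose, hPherm.eq]
    rw [Matrix.conjTranspose_mul, hPkH] at this
    simpa [hM3def, Matrix.mul_assoc, Matrix.mul_neg, Matrix.neg_mul] using this
  -- trace identities
  have key : ∀ (R : Matrix (n × e) (n × e) ℂ), R * R = R →
      ∀ N : Matrix (n × e) (n × e) ℂ, (R * N * R).trace = (R * N).trace := by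
    intro R hR N
    rw [Matrix.trace_mul_comm, ← Matrix.mul_assoc, hR]
  have hPOQO : P * O + Q * O = O := by rw [← Matrix.add_mul, hPQ, Matrix.one_mul]
  have hsumA : M1.trace + M2.trace = (Q * O).trace := by
    have h12 : M1 + M2 = Qk * (V * O * Vᴴ) * Qk := by
      rw [hM1def, hM2def]
      rw [show Qk * V * (P * O) * Vᴴ * Qk + Qk * V * (Q * O) * Vᴴ * Qk
          = Qk * V * (P * O + Q * O) * Vᴴ * Qk by
        simp only [Matrix.mul_add, Matrix.add_mul]]
      rw [hPOQO]
      simp only [Matrix.mul_assoc]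
    rw [← Matrix.trace_add, h12, key Qk hQkQk, hQkdef, trace_kron_one_mul, hpre]
  have hsumB : M2.trace + M3.trace = (Q * O).trace := by
    have h2 : M2.trace = (Qk * (V * (Q * O) * Vᴴ)).trace := by
      rw [hM2def, show Qk * V * (Q * O) * Vᴴ * Qk = Qk * (V * (Q * O) * Vᴴ) * Qk by
        simp only [Matrix.mul_assoc], key Qk hQkQk]
    have h3 : M3.trace = (Pk * (V * (Q * O) * Vᴴ)).trace := by
      rw [hM3def, show Pk * V * (Q * O) * Vᴴ * Pk = Pk * (V * (Q * O) * Vᴴ) * Pk by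
        simp only [Matrix.mul_assoc], key Pk hPkPk]
    rw [h2, h3, ← Matrix.trace_add, ← Matrix.add_mul, add_comm Qk Pk, hPkQk, Matrix.one_mul,
      Matrix.trace_mul_comm, ← Matrix.mul_assoc, ← Matrix.mul_assoc, hiso, Matrix.one_mul]
  have hM1trace : M1.trace = 0 := by
    have h13 : M1.trace = M3.trace := by linear_combination hsumA - hsumB
    have h1 : 0 ≤ M1.trace := psd_trace_nonneg hM1psd
    have h3 : M3.trace ≤ 0 := by
      have := psd_trace_nonneg hM3psd
      rw [Matrix.trace_neg] at this
      exact neg_nonneg.mp this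
    exact le_antisymm (by rw [h13]; exact h3) h1
  have hM1zero : M1 = 0 := psd_trace_eq_zero hM1psd hM1trace
  -- extract `Qk * V * (P * O) = 0`
  set S : Matrix n n ℂ := CFC.sqrt (P * O) with hSdef
  have hSS : S * S = P * O := CFC.sqrt_mul_sqrt_self (P * O) hpos.nonneg
  have hSH : Sᴴ = S := (CFC.sqrt_nonneg (P * O)).posSemidef.1
  set C : Matrix (n × e) n ℂ := Qk * V with hCdef
  have hCS : C * S = 0 := by
    have hCSCS : (C * S) * (C * S)ᴴ = 0 := by
      rw [Matrix.conjTranspose_mul, hSH]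
      calc C * S * (S * Cᴴ) = C * (S * S) * Cᴴ := by simp only [Matrix.mul_assoc]
        _ = C * (P * O) * Cᴴ := by rw [hSS]
        _ = M1 := by
            rw [hM1def, hCdef, Matrix.conjTranspose_mul, hQkH]
            simp only [Matrix.mul_assoc]
        _ = 0 := hM1zero
    exact Matrix.self_mul_conjTranspose_eq_zero.mp hCSCS
  have hCPO : C * (P * O) = 0 := by
    rw [← hSS, ← Matrix.mul_assoc, hCS, Matrix.zero_mul]
  -- conclude `C * P = 0` via surjectivity of `P*O` on the range of `P`
  have hz : ∀ y : n → ℂ, (C * P) *ᵥ y = 0 := by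
    intro y
    obtain ⟨z, hzz⟩ := surj_PO O P hPherm hPproj hstrict y
    calc (C * P) *ᵥ y = C *ᵥ (P *ᵥ y) := (Matrix.mulVec_mulVec y C P).symm
      _ = C *ᵥ ((P * O) *ᵥ z) := by rw [hzz]
      _ = (C * (P * O)) *ᵥ z := Matrix.mulVec_mulVec z C (P * O)
      _ = 0 := by rw [hCPO, Matrix.zero_mulVec]
  have : C * P = 0 := by
    ext i j
    have := congrFun (hz (Pi.single j 1)) i
    simpa using this
  rw [hCdef] at this
  exact this
end
end

section
/- Let P₁, P₂ be projections onto orthogonal subspaces H₁, H₂ of a finite-dimensional Hilbert space, and ρ a density operator with support H₁ ⊕ H₂ and P₂ρP₁ ≠ 0. Write the polar decomposition P₂ρP₁ = WN with N positive on K₁ = Supp(P₂ρP₁) and W a unitary from K₁ onto K₂ = Im(P₂ρP₁). Then any pair of isometries U_i : H_i ⊗ span{u} → H_i ⊗ E (i = 1,2) satisfying Tr_E[(U₁⊕U₂)(ρ ⊗ |u⟩⟨u|)(U₁⊕U₂)†] = ρ decomposes as U_i = V_i ⊕ Ṽ_i with V_i an isometry on K_i ⊗ span{u} → K_i ⊗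 E, Ṽ_i on the orthogonal complements K_i^⊥ = H_i ⊖ K_i, and V₂ = (W ⊗ 1_E) V₁ (W† ⊗ |u⟩⟨u|). -/
open Matrix BigOperators Kronecker
open scoped ComplexOrder

noncomputable section

section Aux

set_option linter.unusedSectionVars false

variable {l m n e : Type*} [Fintype l] [Fintype m] [Fintype n] [Fintype e]
  [DecidableEq n] [DecidableEq e]

lemma kron_ct (A : Matrix n n ℂ) (B : Matrix e e ℂ) : (A ⊗ₖ B)ᴴ = Aᴴ ⊗ₖ Bᴴ := by
  ext ⟨i, k⟩ ⟨j, l⟩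
  simp [conjTranspose_apply, kroneckerMap_apply, mul_comm]

lemma kron_one_ct (A : Matrix n n ℂ) : (A ⊗ₖ (1 : Matrix e e ℂ))ᴴ = Aᴴ ⊗ₖ 1 := by
  rw [kron_ct, conjTranspose_one]

lemma kron_one_mul (A B : Matrix n n ℂ) :
    (A ⊗ₖ (1 : Matrix e e ℂ)) * (B ⊗ₖ 1) = (A * B) ⊗ₖ 1 := by
  rw [← Matrix.mul_kronecker_mul, Matrix.one_mul]

lemma kron_one_add (A B : Matrix n n ℂ) :
    (A + B) ⊗ₖ (1 : Matrix e e ℂ) = A ⊗ₖ 1 + B ⊗ₖ 1 := add_kronecker A B 1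

lemma kron_one_sub (A B : Matrix n n ℂ) :
    (A - B) ⊗ₖ (1 : Matrix e e ℂ) = A ⊗ₖ 1 - B ⊗ₖ 1 := by
  ext ⟨i, k⟩ ⟨j, l⟩
  simp [kroneckerMap_apply, sub_mul]

lemma kron_one_one : (1 : Matrix n n ℂ) ⊗ₖ (1 : Matrix e e ℂ) = 1 := one_kronecker_one

lemma kron_one_zero : (0 : Matrix n n ℂ) ⊗ₖ (1 : Matrix e e ℂ) = 0 := zero_kronecker 1

lemma ptrE_kron_mul (A : Matrix n n ℂ) (X : Matrix (n × e) (n × e) ℂ) :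
    ptrE ((A ⊗ₖ (1 : Matrix e e ℂ)) * X) = A * ptrE X := by
  ext i j
  simp only [ptrE, of_apply, Matrix.mul_apply, Fintype.sum_prod_type, kroneckerMap_apply,
    one_apply, ite_mul, one_mul, zero_mul, mul_ite, mul_zero]
  rw [Finset.sum_comm]
  refine Finset.sum_congr rfl fun a _ => ?_
  rw [Finset.mul_sum]
  refine Finset.sum_congr rfl fun k _ => ?_
  simp

lemma ptrE_mul_kron (A : Matrix n n ℂ) (X : Matrix (n × e) (n × e) ℂ) :
    ptrE (X * (A ⊗ₖ (1 : Matrix e e ℂ))) = ptrE X * A := by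
  ext i j
  simp only [ptrE, of_apply, Matrix.mul_apply, Fintype.sum_prod_type, kroneckerMap_apply,
    one_apply, ite_mul, one_mul, zero_mul, mul_ite, mul_zero]
  rw [Finset.sum_comm]
  refine Finset.sum_congr rfl fun a _ => ?_
  rw [Finset.sum_mul]
  refine Finset.sum_congr rfl fun k _ => ?_
  simp

lemma trace_ptrE (X : Matrix (n × e) (n × e) ℂ) : (ptrE X).trace = X.trace := by
  simp only [Matrix.trace, Matrix.diag, ptrE, of_apply, Fintype.sum_prod_type]

lemma trace_kron_mul (A : Matrix n n ℂ) (X : Matrix (n × e) (n × e) ℂ) :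
    ((A ⊗ₖ (1 : Matrix e e ℂ)) * X).trace = (A * ptrE X).trace := by
  rw [← ptrE_kron_mul, trace_ptrE]

end Aux

section SqrtCompat

open scoped MatrixOrder

variable {n : Type*} [Fintype n] [DecidableEq n]

/-- Square root of a positive semidefinite matrix (compatibility helper). -/
def Matrix.PosSemidef.sqrt {A : Matrix n n ℂ} (_hA : A.PosSemidef) : Matrix n n ℂ := CFC.sqrt A

lemma Matrix.PosSemidef.posSemidef_sqrt {A : Matrix n n ℂ} (hA : A.PosSemidef) :
    hA.sqrt.PosSemidef := (CFC.sqrt_nonneg A).posSemidef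

lemma Matrix.PosSemidef.sqrt_mul_self {A : Matrix n n ℂ} (hA : A.PosSemidef) :
    hA.sqrt * hA.sqrt = A := CFC.sqrt_mul_sqrt_self A hA.nonneg

end SqrtCompat

section Aux2

set_option linter.unusedSectionVars false

variable {m n : Type*} [Fintype m] [Fintype n] [DecidableEq n]

lemma trace_ct_self (Y : Matrix m n ℂ) :
    (Yᴴ * Y).trace = ((∑ j, ∑ i, Complex.normSq (Y i j) : ℝ) : ℂ) := by
  simp only [Matrix.trace, Matrix.diag, Matrix.mul_apply, conjTranspose_apply]
  push_cast
  refine Finset.sum_congr rfl fun j _ => Finset.sum_congr rfl fun i _ => ?_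
  rw [Complex.normSq_eq_conj_mul_self]
  rfl

lemma eq_zero_of_trace_ct {Y : Matrix m n ℂ} (h : (Yᴴ * Y).trace = 0) : Y = 0 := by
  rw [trace_ct_self] at h
  norm_cast at h
  have h' := (Finset.sum_eq_zero_iff_of_nonneg (fun j _ =>
    Finset.sum_nonneg fun i _ => Complex.normSq_nonneg _)).mp h
  ext i j
  have h'' := (Finset.sum_eq_zero_iff_of_nonneg (fun i _ =>
    Complex.normSq_nonneg (Y i j))).mp (h' j (Finset.mem_univ j)) i (Finset.mem_univ i)
  simpa using Complex.normSq_eq_zero.mp h''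

lemma psd_trace_real {A B : Matrix n n ℂ} (hA : A.PosSemidef) (hB : B.PosSemidef) :
    ∃ r : ℝ, 0 ≤ r ∧ (A * B).trace = (r : ℂ) := by
  have key : (A * B).trace = ((hA.sqrt * hB.sqrt)ᴴ * (hA.sqrt * hB.sqrt)).trace := by
    rw [conjTranspose_mul, hA.posSemidef_sqrt.1.eq, hB.posSemidef_sqrt.1.eq]
    calc (A * B).trace = (B * A).trace := Matrix.trace_mul_comm A B
    _ = ((hB.sqrt * hB.sqrt) * A).trace := by rw [hB.sqrt_mul_self]
    _ = (hB.sqrt * (hB.sqrt * A)).trace := by rw [Matrix.mul_assoc]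
    _ = ((hB.sqrt * A) * hB.sqrt).trace := Matrix.trace_mul_comm _ _
    _ = (hB.sqrt * (hA.sqrt * hA.sqrt) * hB.sqrt).trace := by rw [hA.sqrt_mul_self]
    _ = (hB.sqrt * hA.sqrt * (hA.sqrt * hB.sqrt)).trace := by simp only [Matrix.mul_assoc]
  exact ⟨_, Finset.sum_nonneg fun j _ => Finset.sum_nonneg fun i _ =>
    Complex.normSq_nonneg _, key.trans (trace_ct_self _)⟩

lemma psd_mul_eq_zero {A B : Matrix n n ℂ} (hA : A.PosSemidef) (hB : B.PosSemidef)
    (h : (A * B).trace = 0) : A * B = 0 := by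
  have key : (A * B).trace = ((hA.sqrt * hB.sqrt)ᴴ * (hA.sqrt * hB.sqrt)).trace := by
    rw [conjTranspose_mul, hA.posSemidef_sqrt.1.eq, hB.posSemidef_sqrt.1.eq]
    calc (A * B).trace = (B * A).trace := Matrix.trace_mul_comm A B
    _ = ((hB.sqrt * hB.sqrt) * A).trace := by rw [hB.sqrt_mul_self]
    _ = (hB.sqrt * (hB.sqrt * A)).trace := by rw [Matrix.mul_assoc]
    _ = ((hB.sqrt * A) * hB.sqrt).trace := Matrix.trace_mul_comm _ _
    _ = (hB.sqrt * (hA.sqrt * hA.sqrt) * hB.sqrt).trace := by rw [hA.sqrt_mul_self]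
    _ = (hB.sqrt * hA.sqrt * (hA.sqrt * hB.sqrt)).trace := by simp only [Matrix.mul_assoc]
  have hz : hA.sqrt * hB.sqrt = 0 := eq_zero_of_trace_ct (by rw [← key, h])
  calc A * B = hA.sqrt * (hA.sqrt * hB.sqrt) * hB.sqrt := by
        simp only [← Matrix.mul_assoc, hA.sqrt_mul_self]
        simp only [Matrix.mul_assoc, hB.sqrt_mul_self]
  _ = 0 := by rw [hz, Matrix.mul_zero, Matrix.zero_mul]

lemma psd_of_proj {Q : Matrix n n ℂ} (hh : Qᴴ = Q) (hp : Q * Q = Q) : Q.PosSemidef := by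
  have : Q = Qᴴ * Q := by rw [hh, hp]
  rw [this]
  exact Matrix.posSemidef_conjTranspose_mul_self Q

lemma eq_zero_of_forall_mulVec {M : Matrix m n ℂ} (h : ∀ x, M *ᵥ x = 0) : M = 0 := by
  ext i j
  have := congrFun (h (Pi.single j 1)) i
  rw [Matrix.mulVec_single] at this
  simpa using this

lemma range_proj_le {Nm Q : Matrix n n ℂ}
    (h1 : Q * Nm = Nm) (h2 : Nm * Q = Nm) (hker : ∀ x, Nm *ᵥ x = 0 → Q *ᵥ x = 0)
    (x : n → ℂ) : ∃ y, Q *ᵥ x = Nm *ᵥ y := by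
  set f := Matrix.toLin' Nm
  set g := Matrix.toLin' Q
  have hfg : ∀ z, f z = Nm *ᵥ z := fun z => Matrix.toLin'_apply Nm z
  have hgg : ∀ z, g z = Q *ᵥ z := fun z => Matrix.toLin'_apply Q z
  have hk : LinearMap.ker f = LinearMap.ker g := by
    ext z
    simp only [LinearMap.mem_ker, hfg, hgg]
    constructor
    · exact hker z
    · intro hz
      rw [← h2, ← Matrix.mulVec_mulVec, hz, Matrix.mulVec_zero]
  have hr : LinearMap.range f ≤ LinearMap.range g := by
    rintro y ⟨z, rfl⟩
    exact ⟨Nm *ᵥ z, by rw [hgg, hfg, Matrix.mulVec_mulVec, h1]⟩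
  have hdim : Module.finrank ℂ (LinearMap.range g) ≤ Module.finrank ℂ (LinearMap.range f) := by
    have h1' := LinearMap.finrank_range_add_finrank_ker f
    have h2' := LinearMap.finrank_range_add_finrank_ker g
    rw [hk] at h1'
    omega
  have := Submodule.eq_of_le_of_finrank_le hr hdim
  have hx : g x ∈ LinearMap.range f := by rw [this]; exact ⟨x, rfl⟩
  obtain ⟨y, hy⟩ := hx
  exact ⟨y, by rw [← hgg, ← hy, hfg]⟩

end Aux2

section Rigid

variable {n e : Type*} [Fintype n] [DecidableEq n] [Fintype e] [DecidableEq e]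

lemma aux_rigid (ρ : Matrix n n ℂ) (hρ : ρ.PosSemidef)
    (hfull : ∀ x : n → ℂ, ρ.mulVec x = 0 → x = 0)
    (V : Matrix (n × e) n ℂ) (hiso : Vᴴ * V = 1)
    (Q P : Matrix n n ℂ)
    (hQh : Qᴴ = Q) (hQp : Q * Q = Q) (hPh : Pᴴ = P) (hPp : P * P = P)
    (hQP : Q * P = Q) (hPQ : P * Q = Q)
    (hVP : (P ⊗ₖ (1 : Matrix e e ℂ)) * V = V * P)
    (hVQ : (Q ⊗ₖ (1 : Matrix e e ℂ)) * V * Q = V * Q)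
    (hpreP : ptrE (V * (P * ρ * P) * Vᴴ) = P * ρ * P) :
    (Q ⊗ₖ (1 : Matrix e e ℂ)) * V * (P - Q) = 0 := by
  have hisoc : ∀ X : Matrix n n ℂ, Vᴴ * (V * X) = X := by
    intro X
    rw [← Matrix.mul_assoc, hiso, Matrix.one_mul]
  set KQ := Q ⊗ₖ (1 : Matrix e e ℂ) with hKQdef
  set KP := P ⊗ₖ (1 : Matrix e e ℂ) with hKPdef
  have hKQh : KQᴴ = KQ := by rw [hKQdef, kron_one_ct, hQh]
  have hKQp : KQ * KQ = KQ := by rw [hKQdef, kron_one_mul, hQp]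
  have hVQ' : KQ * (V * Q) = V * Q := by rw [← Matrix.mul_assoc]; exact hVQ
  have hVP' : KP * V = V * P := hVP
  set R := Vᴴ * (KQ * V) with hRdef
  have hRh : Rᴴ = R := by
    rw [hRdef, conjTranspose_mul, conjTranspose_mul, hKQh, conjTranspose_conjTranspose,
      Matrix.mul_assoc]
  have hRpsd : R.PosSemidef := by
    have := (psd_of_proj hKQh hKQp).conjTranspose_mul_mul_same V
    rwa [Matrix.mul_assoc] at this
  have hRQ : R * Q = Q := by
    rw [hRdef, Matrix.mul_assoc, Matrix.mul_assoc, hVQ']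
    exact hisoc Q
  have hQR : Q * R = Q := by
    have := congrArg conjTranspose hRQ
    rwa [conjTranspose_mul, hRh, hQh] at this
  have hRP : R * P = R := by
    rw [hRdef, Matrix.mul_assoc, Matrix.mul_assoc, ← hVP', ← Matrix.mul_assoc KQ KP V,
      hKQdef, hKPdef, kron_one_mul, hQP]
  set R' := R - Q with hR'def
  have hR'h : R'ᴴ = R' := by rw [hR'def, conjTranspose_sub, hRh, hQh]
  have hR'psd : R'.PosSemidef := by
    have key : R' = (1 - Q)ᴴ * R * (1 - Q) := by
      rw [conjTranspose_sub, conjTranspose_one, hQh]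
      simp only [Matrix.sub_mul, Matrix.mul_sub, Matrix.one_mul, Matrix.mul_one, hQR, hRQ,
        hQp, sub_self, sub_zero]
      exact hR'def
    rw [key]
    exact hRpsd.conjTranspose_mul_mul_same (1 - Q)
  have htrR : (R * (P * ρ * P)).trace = (Q * (P * ρ * P)).trace := by
    have : (Q * (P * ρ * P)).trace = (R * (P * ρ * P)).trace := by
      calc (Q * (P * ρ * P)).trace
          = (Q * ptrE (V * (P * ρ * P) * Vᴴ)).trace := by rw [hpreP]
        _ = (KQ * (V * (P * ρ * P) * Vᴴ)).trace := by rw [← trace_kron_mul, ← hKQdef]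
        _ = (Vᴴ * (KQ * (V * (P * ρ * P)))).trace := by
            rw [← Matrix.mul_assoc, Matrix.trace_mul_comm]
        _ = (R * (P * ρ * P)).trace := by rw [hRdef]; simp only [Matrix.mul_assoc]
    exact this.symm
  have htr : (R' * (P * ρ * P)).trace = 0 := by
    rw [hR'def, Matrix.sub_mul, Matrix.trace_sub, htrR, sub_self]
  have hPρP : (P * ρ * P).PosSemidef := by
    have := hρ.conjTranspose_mul_mul_same P
    rwa [hPh] at this
  have hzero : R' * (P * ρ * P) = 0 := psd_mul_eq_zero hR'psd hPρP htr
  have hR'P : R' * P = R' := by rw [hR'def, Matrix.sub_mul, hRP, hQP]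
  have hPR' : P * R' = R' := by
    have := congrArg conjTranspose hR'P
    rwa [conjTranspose_mul, hR'h, hPh] at this
  have hR'ρR' : R' * ρ * R' = 0 := by
    calc R' * ρ * R' = (R' * P) * ρ * (P * R') := by rw [hR'P, hPR']
    _ = (R' * (P * ρ * P)) * R' := by simp only [Matrix.mul_assoc]
    _ = 0 := by rw [hzero, Matrix.zero_mul]
  have hR'0 : R' = 0 := by
    refine eq_zero_of_forall_mulVec fun x => ?_
    have h1 : star x ⬝ᵥ (R' * ρ * R') *ᵥ x = 0 := by rw [hR'ρR', Matrix.zero_mulVec, dotProduct_zero]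
    have e : (R' * ρ * R') *ᵥ x = R' *ᵥ (ρ *ᵥ (R' *ᵥ x)) := by
      rw [Matrix.mulVec_mulVec, Matrix.mulVec_mulVec]
    rw [e] at h1
    have h3 : star (R' *ᵥ x) ⬝ᵥ ρ *ᵥ (R' *ᵥ x) = star x ⬝ᵥ R' *ᵥ ρ *ᵥ R' *ᵥ x := by
      rw [Matrix.star_mulVec, hR'h]
      conv_rhs => rw [dotProduct_mulVec]
    exact hfull _ ((hρ.dotProduct_mulVec_zero_iff _).mp (h3.trans h1))
  have hRQ2 : R = Q := by
    have := hR'0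
    rw [hR'def, sub_eq_zero] at this
    exact this
  refine eq_zero_of_trace_ct (Y := KQ * V * (P - Q)) ?_
  have hexp : (KQ * V * (P - Q))ᴴ * (KQ * V * (P - Q)) = (P - Q) * (R * (P - Q)) := by
    rw [conjTranspose_mul, conjTranspose_mul, hKQh, conjTranspose_sub, hPh, hQh, hRdef]
    simp only [Matrix.mul_assoc]
    rw [← Matrix.mul_assoc KQ KQ, hKQp]
  rw [hexp, hRQ2]
  have : Q * (P - Q) = 0 := by rw [Matrix.mul_sub, hQP, hQp, sub_self]
  rw [this, Matrix.mul_zero, Matrix.trace_zero]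

end Rigid

set_option maxHeartbeats 2000000 in
/-- Theorem 2 of the paper: let `ρ` be a density operator with
support `H₁ ⊕ H₂` (here the whole space, `P₁ + P₂ = 1`), `P₂ρP₁ ≠ 0` with polar
decomposition `P₂ρP₁ = W·Nm` (`Nm ≥ 0` with support `K₁`, `W` a partial isometry
with support projection `WᴴW` onto `K₁ ⊆ H₁` and range projection `WWᴴ` onto
`K₂ ⊆ H₂`). Any blockwise isometry `U₁ ⊕ U₂` (as `V = (U₁⊕U₂)(· ⊗ |u⟩)`)
preserving `ρ` splits further as `U_i = V_i ⊕ Ṽ_i` along `K_i ⊕ K_i^⊥`, and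
`V₂ = (W ⊗ 1_E) V₁ (Wᴴ ⊗ Σ_E)`. -/
theorem stmt7 {n e : Type*} [Fintype n] [DecidableEq n] [Fintype e] [DecidableEq e]
    (ρ : Matrix n n ℂ) (hρ : ρ.PosSemidef) (htr : ρ.trace = 1)
    (P₁ P₂ : Matrix n n ℂ)
    (h1h : P₁.IsHermitian) (h1p : P₁ * P₁ = P₁)
    (h2h : P₂.IsHermitian) (h2p : P₂ * P₂ = P₂)
    (horth : P₁ * P₂ = 0) (hsum : P₁ + P₂ = 1)
    (hfull : ∀ x : n → ℂ, ρ.mulVec x = 0 → x = 0)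
    (hoff : P₂ * ρ * P₁ ≠ 0)
    (W Nm : Matrix n n ℂ)
    (hpolar : P₂ * ρ * P₁ = W * Nm)
    (hNm : Nm.PosSemidef)
    (hWpi : W * Wᴴ * W = W)
    (hK1sub : P₁ * (Wᴴ * W) = Wᴴ * W)
    (hK2sub : P₂ * (W * Wᴴ) = W * Wᴴ)
    (hNsupp : Nm * (Wᴴ * W) = Nm) (hNsupp' : (Wᴴ * W) * Nm = Nm)
    (hNker : ∀ x : n → ℂ, Nm.mulVec x = 0 → (Wᴴ * W).mulVec x = 0)
    (V : Matrix (n × e) n ℂ) (hiso : Vᴴ * V = 1)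
    (hblock12 : (P₂ ⊗ₖ (1 : Matrix e e ℂ)) * V * P₁ = 0)
    (hblock21 : (P₁ ⊗ₖ (1 : Matrix e e ℂ)) * V * P₂ = 0)
    (hpre : ptrE (V * ρ * Vᴴ) = ρ) :
    ((Wᴴ * W) ⊗ₖ (1 : Matrix e e ℂ)) * V * (P₁ - Wᴴ * W) = 0 ∧
    ((P₁ - Wᴴ * W) ⊗ₖ (1 : Matrix e e ℂ)) * V * (Wᴴ * W) = 0 ∧
    ((W * Wᴴ) ⊗ₖ (1 : Matrix e e ℂ)) * V * (P₂ - W * Wᴴ) = 0 ∧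
    ((P₂ - W * Wᴴ) ⊗ₖ (1 : Matrix e e ℂ)) * V * (W * Wᴴ) = 0 ∧
    V * (W * Wᴴ) = (W ⊗ₖ (1 : Matrix e e ℂ)) * V * Wᴴ := by
  classical
  have hP21 : P₂ * P₁ = 0 := by
    have h := congrArg conjTranspose horth
    rwa [conjTranspose_mul, h1h.eq, h2h.eq, conjTranspose_zero] at h
  have hQ₁h : (Wᴴ * W)ᴴ = Wᴴ * W := by
    rw [conjTranspose_mul, conjTranspose_conjTranspose]
  have hQ₂h : (W * Wᴴ)ᴴ = W * Wᴴ := by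
    rw [conjTranspose_mul, conjTranspose_conjTranspose]
  have hWpi' : W * (Wᴴ * W) = W := by rw [← Matrix.mul_assoc]; exact hWpi
  have hQ₁p : (Wᴴ * W) * (Wᴴ * W) = Wᴴ * W := by rw [Matrix.mul_assoc, hWpi']
  have hQ₂p : (W * Wᴴ) * (W * Wᴴ) = W * Wᴴ := by rw [← Matrix.mul_assoc, hWpi]
  have hQ₁P₁ : (Wᴴ * W) * P₁ = Wᴴ * W := by
    have h := congrArg conjTranspose hK1sub
    rwa [conjTranspose_mul, hQ₁h, h1h.eq] at h
  have hQ₂P₂ : (W * Wᴴ) * P₂ = W * Wᴴ := by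
    have h := congrArg conjTranspose hK2sub
    rwa [conjTranspose_mul, hQ₂h, h2h.eq] at h
  have hP₂Q₁ : P₂ * (Wᴴ * W) = 0 := by
    rw [← hK1sub, ← Matrix.mul_assoc, hP21, Matrix.zero_mul]
  have hQ₁P₂ : (Wᴴ * W) * P₂ = 0 := by
    have h := congrArg conjTranspose hP₂Q₁
    rwa [conjTranspose_mul, hQ₁h, h2h.eq, conjTranspose_zero] at h
  have hP₁Q₂ : P₁ * (W * Wᴴ) = 0 := by
    rw [← hK2sub, ← Matrix.mul_assoc, horth, Matrix.zero_mul]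
  have hQ₂P₁ : (W * Wᴴ) * P₁ = 0 := by
    have h := congrArg conjTranspose hP₁Q₂
    rwa [conjTranspose_mul, hQ₂h, h1h.eq, conjTranspose_zero] at h
  have hWQ₁ : W * (Wᴴ * W) = W := hWpi'
  have hQ₂W : (W * Wᴴ) * W = W := hWpi
  have hQ₁Wc : (Wᴴ * W) * Wᴴ = Wᴴ := by
    have h := congrArg conjTranspose hWQ₁
    rwa [conjTranspose_mul, hQ₁h] at h
  have hWcQ₂ : Wᴴ * (W * Wᴴ) = Wᴴ := by
    have h := congrArg conjTranspose hQ₂W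
    rwa [conjTranspose_mul, hQ₂h] at h
  have hP₂W : P₂ * W = W := by rw [← hQ₂W, ← Matrix.mul_assoc, hK2sub]
  have hP₁Wc : P₁ * Wᴴ = Wᴴ := by rw [← hQ₁Wc, ← Matrix.mul_assoc, hK1sub]
  have hWP₁ : W * P₁ = W := by
    have h := congrArg conjTranspose hP₁Wc
    rwa [conjTranspose_mul, conjTranspose_conjTranspose, h1h.eq] at h
  have hWcP₂ : Wᴴ * P₂ = Wᴴ := by
    have h := congrArg conjTranspose hP₂W
    rwa [conjTranspose_mul, h2h.eq] at h
  -- block commutation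
  have hKsum : P₁ ⊗ₖ (1 : Matrix e e ℂ) + P₂ ⊗ₖ (1 : Matrix e e ℂ) = 1 := by
    rw [← kron_one_add, hsum, kron_one_one]
  have hcomm1 : (P₁ ⊗ₖ (1 : Matrix e e ℂ)) * V = V * P₁ := by
    have h1 : V * P₁ = (P₁ ⊗ₖ (1 : Matrix e e ℂ)) * V * P₁ := by
      conv_lhs => rw [← Matrix.one_mul V, ← hKsum]
      rw [Matrix.add_mul, Matrix.add_mul, hblock12, add_zero]
    have h2 : (P₁ ⊗ₖ (1 : Matrix e e ℂ)) * V = (P₁ ⊗ₖ (1 : Matrix e e ℂ)) * V * P₁ := by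
      conv_lhs => rw [← Matrix.mul_one ((P₁ ⊗ₖ (1 : Matrix e e ℂ)) * V), ← hsum]
      rw [Matrix.mul_add, hblock21, add_zero]
    rw [h2, ← h1]
  have hcomm2 : (P₂ ⊗ₖ (1 : Matrix e e ℂ)) * V = V * P₂ := by
    have h1 : V * P₂ = (P₂ ⊗ₖ (1 : Matrix e e ℂ)) * V * P₂ := by
      conv_lhs => rw [← Matrix.one_mul V, ← hKsum]
      rw [Matrix.add_mul, Matrix.add_mul, hblock21, zero_add]
    have h2 : (P₂ ⊗ₖ (1 : Matrix e e ℂ)) * V = (P₂ ⊗ₖ (1 : Matrix e e ℂ)) * V * P₂ := by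
      conv_lhs => rw [← Matrix.mul_one ((P₂ ⊗ₖ (1 : Matrix e e ℂ)) * V), ← hsum]
      rw [Matrix.mul_add, hblock12, zero_add]
    rw [h2, ← h1]
  have hct1 : Vᴴ * (P₁ ⊗ₖ (1 : Matrix e e ℂ)) = P₁ * Vᴴ := by
    have h := congrArg conjTranspose hcomm1
    rwa [conjTranspose_mul, conjTranspose_mul, kron_one_ct, h1h.eq] at h
  have hct2 : Vᴴ * (P₂ ⊗ₖ (1 : Matrix e e ℂ)) = P₂ * Vᴴ := by
    have h := congrArg conjTranspose hcomm2
    rwa [conjTranspose_mul, conjTranspose_mul, kron_one_ct, h2h.eq] at h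
  -- blockwise preservation
  have hpre21 : ptrE (V * (W * Nm) * Vᴴ) = W * Nm := by
    have he : V * (W * Nm) * Vᴴ =
        (P₂ ⊗ₖ (1 : Matrix e e ℂ)) * (V * ρ * Vᴴ) * (P₁ ⊗ₖ (1 : Matrix e e ℂ)) := by
      rw [← hpolar]
      calc V * (P₂ * ρ * P₁) * Vᴴ = (V * P₂) * (ρ * (P₁ * Vᴴ)) := by
            simp only [Matrix.mul_assoc]
      _ = ((P₂ ⊗ₖ (1 : Matrix e e ℂ)) * V) * (ρ * (Vᴴ * (P₁ ⊗ₖ (1 : Matrix e e ℂ)))) := by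
            rw [hcomm2, hct1]
      _ = (P₂ ⊗ₖ (1 : Matrix e e ℂ)) * (V * ρ * Vᴴ) * (P₁ ⊗ₖ (1 : Matrix e e ℂ)) := by
            simp only [Matrix.mul_assoc]
    rw [he, ptrE_mul_kron, ptrE_kron_mul, hpre]
    exact hpolar
  have hpre11 : ptrE (V * (P₁ * ρ * P₁) * Vᴴ) = P₁ * ρ * P₁ := by
    have he : V * (P₁ * ρ * P₁) * Vᴴ =
        (P₁ ⊗ₖ (1 : Matrix e e ℂ)) * (V * ρ * Vᴴ) * (P₁ ⊗ₖ (1 : Matrix e e ℂ)) := by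
      calc V * (P₁ * ρ * P₁) * Vᴴ = (V * P₁) * (ρ * (P₁ * Vᴴ)) := by
            simp only [Matrix.mul_assoc]
      _ = ((P₁ ⊗ₖ (1 : Matrix e e ℂ)) * V) * (ρ * (Vᴴ * (P₁ ⊗ₖ (1 : Matrix e e ℂ)))) := by
            rw [hcomm1, hct1]
      _ = (P₁ ⊗ₖ (1 : Matrix e e ℂ)) * (V * ρ * Vᴴ) * (P₁ ⊗ₖ (1 : Matrix e e ℂ)) := by
            simp only [Matrix.mul_assoc]
    rw [he, ptrE_mul_kron, ptrE_kron_mul, hpre]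
  have hpre22 : ptrE (V * (P₂ * ρ * P₂) * Vᴴ) = P₂ * ρ * P₂ := by
    have he : V * (P₂ * ρ * P₂) * Vᴴ =
        (P₂ ⊗ₖ (1 : Matrix e e ℂ)) * (V * ρ * Vᴴ) * (P₂ ⊗ₖ (1 : Matrix e e ℂ)) := by
      calc V * (P₂ * ρ * P₂) * Vᴴ = (V * P₂) * (ρ * (P₂ * Vᴴ)) := by
            simp only [Matrix.mul_assoc]
      _ = ((P₂ ⊗ₖ (1 : Matrix e e ℂ)) * V) * (ρ * (Vᴴ * (P₂ ⊗ₖ (1 : Matrix e e ℂ)))) := by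
            rw [hcomm2, hct2]
      _ = (P₂ ⊗ₖ (1 : Matrix e e ℂ)) * (V * ρ * Vᴴ) * (P₂ ⊗ₖ (1 : Matrix e e ℂ)) := by
            simp only [Matrix.mul_assoc]
    rw [he, ptrE_mul_kron, ptrE_kron_mul, hpre]

  -- trace identities
  have tNm : star Nm.trace = Nm.trace := by
    rw [← Matrix.trace_conjTranspose, hNm.isHermitian.eq]
  have t1 : ((Wᴴ ⊗ₖ (1 : Matrix e e ℂ)) * (V * (W * Nm) * Vᴴ)).trace = Nm.trace := by
    rw [trace_kron_mul, hpre21, ← Matrix.mul_assoc, hNsupp']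
  have t1' : (Vᴴ * ((Wᴴ ⊗ₖ (1 : Matrix e e ℂ)) * (V * (W * Nm)))).trace = Nm.trace := by
    rw [Matrix.trace_mul_comm, Matrix.mul_assoc]
    exact t1
  have hA1 : (V * W)ᴴ * (V * W) = Wᴴ * W := by
    rw [conjTranspose_mul, Matrix.mul_assoc, ← Matrix.mul_assoc Vᴴ V W, hiso, Matrix.one_mul]
  have ht_aa : ((V * W)ᴴ * ((V * W) * Nm)).trace = Nm.trace := by
    rw [← Matrix.mul_assoc, hA1, hNsupp']
  have ht_ba : (((W ⊗ₖ (1 : Matrix e e ℂ)) * V)ᴴ * ((V * W) * Nm)).trace = Nm.trace := by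
    rw [conjTranspose_mul, kron_one_ct, Matrix.mul_assoc, Matrix.mul_assoc V W Nm]
    exact t1'
  have ht_ab : ((V * W)ᴴ * (((W ⊗ₖ (1 : Matrix e e ℂ)) * V) * Nm)).trace = Nm.trace := by
    have he : ((V * W)ᴴ * (((W ⊗ₖ (1 : Matrix e e ℂ)) * V) * Nm))ᴴ
        = Nm * (((W ⊗ₖ (1 : Matrix e e ℂ)) * V)ᴴ * (V * W)) := by
      rw [conjTranspose_mul, conjTranspose_conjTranspose, conjTranspose_mul,
        hNm.isHermitian.eq, Matrix.mul_assoc]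
    calc ((V * W)ᴴ * (((W ⊗ₖ (1 : Matrix e e ℂ)) * V) * Nm)).trace
        = star ((((V * W)ᴴ * (((W ⊗ₖ (1 : Matrix e e ℂ)) * V) * Nm))ᴴ).trace) := by
          rw [Matrix.trace_conjTranspose, star_star]
      _ = star ((Nm * (((W ⊗ₖ (1 : Matrix e e ℂ)) * V)ᴴ * (V * W))).trace) := by rw [he]
      _ = star (((((W ⊗ₖ (1 : Matrix e e ℂ)) * V)ᴴ * (V * W)) * Nm).trace) := by
          rw [Matrix.trace_mul_comm]
      _ = star ((((W ⊗ₖ (1 : Matrix e e ℂ)) * V)ᴴ * ((V * W) * Nm)).trace) := by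
          rw [Matrix.mul_assoc]
      _ = star (Nm.trace) := by rw [ht_ba]
      _ = Nm.trace := tNm
  have hbb : ((W ⊗ₖ (1 : Matrix e e ℂ)) * V)ᴴ * ((W ⊗ₖ (1 : Matrix e e ℂ)) * V)
      = Vᴴ * (((Wᴴ * W) ⊗ₖ (1 : Matrix e e ℂ)) * V) := by
    rw [conjTranspose_mul, kron_one_ct, Matrix.mul_assoc,
      ← Matrix.mul_assoc (Wᴴ ⊗ₖ (1 : Matrix e e ℂ)) (W ⊗ₖ (1 : Matrix e e ℂ)) V, kron_one_mul]
  have hD0psd : (Vᴴ * (((1 - Wᴴ * W) ⊗ₖ (1 : Matrix e e ℂ)) * V)).PosSemidef := by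
    have hherm : ((1 - Wᴴ * W) ⊗ₖ (1 : Matrix e e ℂ))ᴴ = (1 - Wᴴ * W) ⊗ₖ (1 : Matrix e e ℂ) := by
      rw [kron_one_ct, conjTranspose_sub, conjTranspose_one, hQ₁h]
    have hidem : ((1 - Wᴴ * W) ⊗ₖ (1 : Matrix e e ℂ)) * ((1 - Wᴴ * W) ⊗ₖ (1 : Matrix e e ℂ))
        = (1 - Wᴴ * W) ⊗ₖ (1 : Matrix e e ℂ) := by
      rw [kron_one_mul]
      congr 1
      simp only [Matrix.sub_mul, Matrix.mul_sub, Matrix.one_mul, Matrix.mul_one, hQ₁p,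
        sub_self, sub_zero]
    have := (psd_of_proj hherm hidem).conjTranspose_mul_mul_same V
    rwa [Matrix.mul_assoc] at this
  have hsplit : Vᴴ * (((Wᴴ * W) ⊗ₖ (1 : Matrix e e ℂ)) * V)
      + Vᴴ * (((1 - Wᴴ * W) ⊗ₖ (1 : Matrix e e ℂ)) * V) = 1 := by
    rw [← Matrix.mul_add, ← Matrix.add_mul, ← kron_one_add, add_sub_cancel, kron_one_one,
      Matrix.one_mul, hiso]
  have hZZtr : ((V * W - (W ⊗ₖ (1 : Matrix e e ℂ)) * V)ᴴ
        * ((V * W - (W ⊗ₖ (1 : Matrix e e ℂ)) * V) * Nm)).trace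
      = ((Vᴴ * (((Wᴴ * W) ⊗ₖ (1 : Matrix e e ℂ)) * V)) * Nm).trace - Nm.trace := by
    have expand : (V * W - (W ⊗ₖ (1 : Matrix e e ℂ)) * V)ᴴ
          * ((V * W - (W ⊗ₖ (1 : Matrix e e ℂ)) * V) * Nm)
        = (V * W)ᴴ * ((V * W) * Nm) - (V * W)ᴴ * (((W ⊗ₖ (1 : Matrix e e ℂ)) * V) * Nm)
          - (((W ⊗ₖ (1 : Matrix e e ℂ)) * V)ᴴ * ((V * W) * Nm)
            - ((W ⊗ₖ (1 : Matrix e e ℂ)) * V)ᴴ * (((W ⊗ₖ (1 : Matrix e e ℂ)) * V) * Nm)) := by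
      simp only [conjTranspose_sub, Matrix.sub_mul, Matrix.mul_sub]
      abel
    rw [expand, Matrix.trace_sub, Matrix.trace_sub, Matrix.trace_sub, ht_aa, ht_ab, ht_ba,
      ← Matrix.mul_assoc (((W ⊗ₖ (1 : Matrix e e ℂ)) * V)ᴴ) ((W ⊗ₖ (1 : Matrix e e ℂ)) * V) Nm,
      hbb]
    ring
  obtain ⟨r₁, hr₁, hr₁e⟩ := psd_trace_real
    (posSemidef_conjTranspose_mul_self (V * W - (W ⊗ₖ (1 : Matrix e e ℂ)) * V)) hNm
  obtain ⟨r₂, hr₂, hr₂e⟩ := psd_trace_real hD0psd hNm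
  have hr1neg : (r₁ : ℂ) = -(r₂ : ℂ) := by
    have h1 : ((Vᴴ * (((Wᴴ * W) ⊗ₖ (1 : Matrix e e ℂ)) * V)) * Nm).trace
        + ((Vᴴ * (((1 - Wᴴ * W) ⊗ₖ (1 : Matrix e e ℂ)) * V)) * Nm).trace = Nm.trace := by
      rw [← Matrix.trace_add, ← Matrix.add_mul, hsplit, Matrix.one_mul]
    have e1 : ((V * W - (W ⊗ₖ (1 : Matrix e e ℂ)) * V)ᴴ
          * ((V * W - (W ⊗ₖ (1 : Matrix e e ℂ)) * V) * Nm)).trace = (r₁ : ℂ) := by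
      rw [← Matrix.mul_assoc]; exact hr₁e
    have hR0 : ((Vᴴ * (((Wᴴ * W) ⊗ₖ (1 : Matrix e e ℂ)) * V)) * Nm).trace
        = Nm.trace - (r₂ : ℂ) := by
      rw [← h1, hr₂e]; ring
    calc (r₁ : ℂ) = _ := e1.symm
      _ = ((Vᴴ * (((Wᴴ * W) ⊗ₖ (1 : Matrix e e ℂ)) * V)) * Nm).trace - Nm.trace := hZZtr
      _ = (Nm.trace - (r₂ : ℂ)) - Nm.trace := by rw [hR0]
      _ = -(r₂ : ℂ) := by ring
  have hr10 : r₁ = 0 := by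
    have h : r₁ = -r₂ := by exact_mod_cast hr1neg
    linarith
  have hZZNm : ((V * W - (W ⊗ₖ (1 : Matrix e e ℂ)) * V)ᴴ
        * (V * W - (W ⊗ₖ (1 : Matrix e e ℂ)) * V)) * Nm = 0 :=
    psd_mul_eq_zero (posSemidef_conjTranspose_mul_self _) hNm (by rw [hr₁e, hr10]; norm_num)
  have hZNm : (V * W - (W ⊗ₖ (1 : Matrix e e ℂ)) * V) * Nm = 0 := by
    apply eq_zero_of_trace_ct
    have he : ((V * W - (W ⊗ₖ (1 : Matrix e e ℂ)) * V) * Nm)ᴴ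
          * ((V * W - (W ⊗ₖ (1 : Matrix e e ℂ)) * V) * Nm)
        = Nm * (((V * W - (W ⊗ₖ (1 : Matrix e e ℂ)) * V)ᴴ
          * (V * W - (W ⊗ₖ (1 : Matrix e e ℂ)) * V)) * Nm) := by
      rw [conjTranspose_mul, hNm.isHermitian.eq]
      simp only [Matrix.mul_assoc]
    rw [he, hZZNm, Matrix.mul_zero, Matrix.trace_zero]
  have hZQ : (V * W - (W ⊗ₖ (1 : Matrix e e ℂ)) * V) * (Wᴴ * W) = 0 := by
    apply eq_zero_of_forall_mulVec
    intro x
    obtain ⟨y, hy⟩ := range_proj_le hNsupp' hNsupp hNker x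
    rw [← Matrix.mulVec_mulVec, hy, Matrix.mulVec_mulVec, hZNm, Matrix.zero_mulVec]
  have hE1 : V * W = (W ⊗ₖ (1 : Matrix e e ℂ)) * V * (Wᴴ * W) := by
    have h := hZQ
    rw [Matrix.sub_mul, sub_eq_zero, Matrix.mul_assoc, hWQ₁] at h
    exact h
  have goal5 : V * (W * Wᴴ) = (W ⊗ₖ (1 : Matrix e e ℂ)) * V * Wᴴ := by
    rw [← Matrix.mul_assoc, hE1, Matrix.mul_assoc, hQ₁Wc]
  have goal4 : ((P₂ - W * Wᴴ) ⊗ₖ (1 : Matrix e e ℂ)) * V * (W * Wᴴ) = 0 := by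
    calc ((P₂ - W * Wᴴ) ⊗ₖ (1 : Matrix e e ℂ)) * V * (W * Wᴴ)
        = ((P₂ - W * Wᴴ) ⊗ₖ (1 : Matrix e e ℂ)) * (V * (W * Wᴴ)) := by rw [Matrix.mul_assoc]
      _ = ((P₂ - W * Wᴴ) ⊗ₖ (1 : Matrix e e ℂ)) * ((W ⊗ₖ (1 : Matrix e e ℂ)) * (V * Wᴴ)) := by
          rw [goal5, Matrix.mul_assoc]
      _ = (((P₂ - W * Wᴴ) * W) ⊗ₖ (1 : Matrix e e ℂ)) * (V * Wᴴ) := by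
          rw [← Matrix.mul_assoc, kron_one_mul]
      _ = 0 := by rw [Matrix.sub_mul, hP₂W, hQ₂W, sub_self, kron_one_zero, Matrix.zero_mul]
  -- goal 2
  have hKWVQ : (W ⊗ₖ (1 : Matrix e e ℂ)) * (V * (Wᴴ * W)) = V * W := by
    rw [← Matrix.mul_assoc]; exact hE1.symm
  have hE1ct : (Wᴴ * W) * (Vᴴ * (Wᴴ ⊗ₖ (1 : Matrix e e ℂ))) = Wᴴ * Vᴴ := by
    have h := congrArg conjTranspose hE1
    rw [conjTranspose_mul, conjTranspose_mul, hQ₁h, conjTranspose_mul, kron_one_ct] at h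
    exact h.symm
  have hsq1 : (P₁ - Wᴴ * W) * (P₁ - Wᴴ * W) = P₁ - Wᴴ * W := by
    simp only [Matrix.sub_mul, Matrix.mul_sub, h1p, hK1sub, hQ₁P₁, hQ₁p, sub_self, sub_zero]
  have hherm12 : ((P₁ - Wᴴ * W) ⊗ₖ (1 : Matrix e e ℂ))ᴴ = (P₁ - Wᴴ * W) ⊗ₖ (1 : Matrix e e ℂ) := by
    rw [kron_one_ct, conjTranspose_sub, h1h.eq, hQ₁h]
  have goal2 : ((P₁ - Wᴴ * W) ⊗ₖ (1 : Matrix e e ℂ)) * V * (Wᴴ * W) = 0 := by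
    apply eq_zero_of_trace_ct
    have piece1 : ((P₁ - Wᴴ * W) ⊗ₖ (1 : Matrix e e ℂ)) * (V * (Wᴴ * W))
        = V * (Wᴴ * W) - (Wᴴ ⊗ₖ (1 : Matrix e e ℂ)) * (V * W) := by
      rw [kron_one_sub, Matrix.sub_mul]
      congr 1
      · rw [← Matrix.mul_assoc, hcomm1, Matrix.mul_assoc, hK1sub]
      · rw [← kron_one_mul Wᴴ W, Matrix.mul_assoc, hKWVQ]
    have he : (((P₁ - Wᴴ * W) ⊗ₖ (1 : Matrix e e ℂ)) * V * (Wᴴ * W))ᴴ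
          * (((P₁ - Wᴴ * W) ⊗ₖ (1 : Matrix e e ℂ)) * V * (Wᴴ * W)) = 0 := by
      rw [conjTranspose_mul, hQ₁h, conjTranspose_mul, hherm12]
      calc (Wᴴ * W) * (Vᴴ * ((P₁ - Wᴴ * W) ⊗ₖ (1 : Matrix e e ℂ)))
            * (((P₁ - Wᴴ * W) ⊗ₖ (1 : Matrix e e ℂ)) * V * (Wᴴ * W))
          = (Wᴴ * W) * (Vᴴ * (((P₁ - Wᴴ * W) ⊗ₖ (1 : Matrix e e ℂ))
              * (((P₁ - Wᴴ * W) ⊗ₖ (1 : Matrix e e ℂ)) * (V * (Wᴴ * W))))) := by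
            simp only [Matrix.mul_assoc]
        _ = (Wᴴ * W) * (Vᴴ * (((P₁ - Wᴴ * W) ⊗ₖ (1 : Matrix e e ℂ)) * (V * (Wᴴ * W)))) := by
            rw [← Matrix.mul_assoc ((P₁ - Wᴴ * W) ⊗ₖ (1 : Matrix e e ℂ))
              ((P₁ - Wᴴ * W) ⊗ₖ (1 : Matrix e e ℂ)), kron_one_mul, hsq1]
        _ = (Wᴴ * W) * (Vᴴ * (V * (Wᴴ * W) - (Wᴴ ⊗ₖ (1 : Matrix e e ℂ)) * (V * W))) := by
            rw [piece1]
        _ = (Wᴴ * W) * (Vᴴ * (V * (Wᴴ * W)))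
            - ((Wᴴ * W) * (Vᴴ * (Wᴴ ⊗ₖ (1 : Matrix e e ℂ)))) * (V * W) := by
            rw [Matrix.mul_sub, Matrix.mul_sub]
            simp only [Matrix.mul_assoc]
        _ = (Wᴴ * W) * (Wᴴ * W) - (Wᴴ * Vᴴ) * (V * W) := by
            rw [← Matrix.mul_assoc Vᴴ V (Wᴴ * W), hiso, Matrix.one_mul, hE1ct]
        _ = 0 := by
            rw [hQ₁p, Matrix.mul_assoc, ← Matrix.mul_assoc Vᴴ V W, hiso, Matrix.one_mul,
              sub_self]
    rw [he, Matrix.trace_zero]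
  -- goal 1 via aux_rigid
  have hVQ1 : ((Wᴴ * W) ⊗ₖ (1 : Matrix e e ℂ)) * V * (Wᴴ * W) = V * (Wᴴ * W) := by
    have h : V * (Wᴴ * W) = (P₁ ⊗ₖ (1 : Matrix e e ℂ)) * V * (Wᴴ * W) := by
      rw [hcomm1, Matrix.mul_assoc, hK1sub]
    have hsplitP : (P₁ ⊗ₖ (1 : Matrix e e ℂ)) * V * (Wᴴ * W)
        = ((Wᴴ * W) ⊗ₖ (1 : Matrix e e ℂ)) * V * (Wᴴ * W)
          + ((P₁ - Wᴴ * W) ⊗ₖ (1 : Matrix e e ℂ)) * V * (Wᴴ * W) := by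
      rw [← Matrix.add_mul, ← Matrix.add_mul, ← kron_one_add, add_sub_cancel]
    rw [h, hsplitP, goal2, add_zero]
  have goal1 : ((Wᴴ * W) ⊗ₖ (1 : Matrix e e ℂ)) * V * (P₁ - Wᴴ * W) = 0 :=
    aux_rigid ρ hρ hfull V hiso (Wᴴ * W) P₁ hQ₁h hQ₁p h1h.eq h1p hQ₁P₁ hK1sub hcomm1 hVQ1 hpre11
  -- goal 3 via aux_rigid
  have hVQ2 : ((W * Wᴴ) ⊗ₖ (1 : Matrix e e ℂ)) * V * (W * Wᴴ) = V * (W * Wᴴ) := by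
    rw [Matrix.mul_assoc, goal5, ← Matrix.mul_assoc, ← Matrix.mul_assoc, kron_one_mul, hQ₂W]
  have goal3 : ((W * Wᴴ) ⊗ₖ (1 : Matrix e e ℂ)) * V * (P₂ - W * Wᴴ) = 0 :=
    aux_rigid ρ hρ hfull V hiso (W * Wᴴ) P₂ hQ₂h hQ₂p h2h.eq h2p hQ₂P₂ hK2sub hcomm2 hVQ2 hpre22
  exact ⟨goal1, goal2, goal3, goal4, goal5⟩
end
end
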